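/- Let λ > 0 and a ∈ ℝ, and let y : [0,∞) → ℝ be continuous, twice continuously differentiable on (0,∞), with y(0) = a and ẏ(t) → 0 as t → 0⁺, satisfying ÿ(t) + (3/t)·ẏ(t) + λ·y(t) = 0 for all t > 0. Then ∫₀^∞ |ẏ(t)| dt < ∞. -/

import Mathlib

set_option maxHeartbeats 1600000

/-- for `λ > 0`, any solution of the scalar critical Nesterov flow
`ÿ(t) + (3/t)·ẏ(t) + λ·y(t) = 0` with `y(0) = a` and `ẏ(0⁺) = 0` satisfies
`∫₀^∞ |ẏ(t)| dt < ∞`. -/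
theorem scalar_quadratic_nesterov_flow_rectifiable (lam a : ℝ) (hlam : 0 < lam)
    (y y' y'' : ℝ → ℝ)
    (hycont : ContinuousOn y (Set.Ici 0))
    (hy' : ∀ t > (0:ℝ), HasDerivAt y (y' t) t)
    (hy'' : ∀ t > (0:ℝ), HasDerivAt y' (y'' t) t)
    (hy''cont : ContinuousOn y'' (Set.Ioi 0))
    (hy0 : y 0 = a)
    (hy'0 : Filter.Tendsto y' (nhdsWithin 0 (Set.Ioi 0)) (nhds 0))
    (hODE : ∀ t > (0:ℝ), y'' t + (3 / t) * y' t + lam * y t = 0) :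
    (∫⁻ t in Set.Ioi (0:ℝ), ENNReal.ofReal |y' t|) < ⊤ := by
  classical
  -- the Lyapunov function
  obtain ⟨Φ, hΦdef⟩ : ∃ Φ : ℝ → ℝ, Φ = fun s =>
      s^3*((y' s)^2/2 + lam*(y s)^2/2) + (3/2)*(s^2*(y s*y' s)) + (3/4)*(s*(y s)^2)
        + (3/(4*lam))*((lam/2)*(s^2*(y s)^2) + (1/2)*(2*y s + s*y' s)^2) := ⟨_, rfl⟩
  have hPhi : ∀ x > (0:ℝ), HasDerivAt Φ ((3/4)*(1-x)*(y x)^2) x := by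
    intro x hx
    have hx0 : x ≠ 0 := ne_of_gt hx
    have hy1 := hy' x hx
    have hy2 := hy'' x hx
    have hw : y'' x = -(3/x)*y' x - lam*y x := by have := hODE x hx; linarith
    have d1 : HasDerivAt (fun s => (y s)^2) (2*y x*y' x) x := by
      simpa using hy1.fun_pow 2
    have d2 : HasDerivAt (fun s => (y' s)^2) (2*y' x*y'' x) x := by
      simpa using hy2.fun_pow 2
    have d3 : HasDerivAt (fun s => 2*y s + s*y' s)
        (2*y' x + (1*y' x + x*y'' x)) x :=
      (hy1.const_mul 2).add ((hasDerivAt_id' (x := x)).mul hy2)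
    have d4 : HasDerivAt (fun s => (2*y s + s*y' s)^2)
        (2*(2*y x + x*y' x)*(2*y' x + (1*y' x + x*y'' x))) x := by
      simpa using d3.fun_pow 2
    have hA : HasDerivAt (fun s => s^3*((y' s)^2/2 + lam*(y s)^2/2))
        ((3:ℕ)*x^2*((y' x)^2/2 + lam*(y x)^2/2)
          + x^3*((2*y' x*y'' x)/2 + (lam*(2*y x*y' x))/2)) x := by
      simpa using (hasDerivAt_pow 3 x).fun_mul ((d2.div_const 2).fun_add ((d1.const_mul lam).div_const 2))
    have hB : HasDerivAt (fun s => (3/2)*(s^2*(y s*y' s)))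
        ((3/2)*((2:ℕ)*x^1*(y x*y' x) + x^2*(y' x*y' x + y x*y'' x))) x :=
      ((hasDerivAt_pow 2 x).mul (hy1.mul hy2)).const_mul (3/2)
    have hC : HasDerivAt (fun s => (3/4)*(s*(y s)^2))
        ((3/4)*(1*(y x)^2 + x*(2*y x*y' x))) x :=
      ((hasDerivAt_id' (x := x)).mul d1).const_mul (3/4)
    have hD : HasDerivAt
        (fun s => (3/(4*lam))*((lam/2)*(s^2*(y s)^2) + (1/2)*(2*y s + s*y' s)^2))
        ((3/(4*lam))*((lam/2)*((2:ℕ)*x^1*(y x)^2 + x^2*(2*y x*y' x))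
          + (1/2)*(2*(2*y x + x*y' x)*(2*y' x + (1*y' x + x*y'' x))))) x :=
      ((((hasDerivAt_pow 2 x).mul d1).const_mul (lam/2)).add (d4.const_mul (1/2))).const_mul
        (3/(4*lam))
    have H := ((hA.add hB).add hC).add hD
    have hΦ : Φ = fun s =>
        s^3*((y' s)^2/2 + lam*(y s)^2/2) + (3/2)*(s^2*(y s*y' s)) + (3/4)*(s*(y s)^2)
          + (3/(4*lam))*((lam/2)*(s^2*(y s)^2) + (1/2)*(2*y s + s*y' s)^2) := hΦdef
    rw [hΦ]
    refine H.congr_deriv ?_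
    rw [hw]
    field_simp
    ring
  -- threshold
  obtain ⟨t₀, ht₀def⟩ : ∃ t₀ : ℝ, t₀ = max 1 (3/(2*lam)) := ⟨_, rfl⟩
  have ht₀1 : (1:ℝ) ≤ t₀ := ht₀def ▸ le_max_left _ _
  have ht₀pos : (0:ℝ) < t₀ := lt_of_lt_of_le one_pos ht₀1
  -- Φ is antitone on [t₀, ∞)
  have hanti : AntitoneOn Φ (Set.Ici t₀) := by
    apply antitoneOn_of_deriv_nonpos (convex_Ici t₀)
    · intro s hs
      have hs0 : 0 < s := lt_of_lt_of_le ht₀pos hs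
      exact ((hPhi s hs0).continuousAt).continuousWithinAt
    · intro s hs
      rw [interior_Ici] at hs
      have hs0 : 0 < s := lt_trans ht₀pos hs
      exact ((hPhi s hs0).differentiableAt).differentiableWithinAt
    · intro s hs
      rw [interior_Ici] at hs
      have hs0 : 0 < s := lt_trans ht₀pos hs
      rw [(hPhi s hs0).deriv]
      have hs1 : (1:ℝ) ≤ s := le_of_lt (lt_of_le_of_lt ht₀1 hs)
      nlinarith [sq_nonneg (y s)]
  obtain ⟨M, hMdef⟩ : ∃ M : ℝ, M = Φ t₀ := ⟨_, rfl⟩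
  -- pointwise lower bound for Φ
  have hlow : ∀ t : ℝ, t₀ ≤ t → (1/8)*t^3*(y' t)^2 ≤ Φ t := by
    intro t ht
    have ht1 : (1:ℝ) ≤ t := le_trans ht₀1 ht
    have htl : 3/(2*lam) ≤ t := le_trans (ht₀def ▸ le_max_right (1:ℝ) (3/(2*lam))) ht
    have hlt : 3/2 ≤ lam * t := by
      rw [div_le_iff₀ (by positivity)] at htl
      linarith
    have h0 : 0 ≤ (3/(4*lam))*((lam/2)*(t^2*(y t)^2) + (1/2)*(2*y t + t*y' t)^2) := by
      positivity
    have hkey : 0 ≤ (3/8)*t*(t*y' t + 2*y t)^2 := by positivity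
    have ht2 : t ≤ t^2 := by nlinarith
    have hkey2 : (3/2)*t^2 ≤ lam*t*t^2 := by nlinarith [mul_le_mul_of_nonneg_right hlt (sq_nonneg t)]
    have hkey3 : (3/4)*t ≤ (lam/2)*t^3 := by nlinarith
    have h2 : (3/4)*t*(y t)^2 ≤ (lam/2)*t^3*(y t)^2 := by
      nlinarith [mul_le_mul_of_nonneg_right hkey3 (sq_nonneg (y t))]
    have hΦt : Φ t = (1/8)*t^3*(y' t)^2 + (3/8)*t*(t*y' t + 2*y t)^2
        + ((lam/2)*t^3*(y t)^2 - (3/4)*t*(y t)^2)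
        + (3/(4*lam))*((lam/2)*(t^2*(y t)^2) + (1/2)*(2*y t + t*y' t)^2) := by
      simp only [hΦdef]; ring
    linarith [hkey, h0, h2]
  have hM0 : 0 ≤ M := hMdef ▸ le_trans (by positivity) (hlow t₀ le_rfl)
  -- decay bound for y' on (t₀, ∞)
  have hdecay : ∀ t ∈ Set.Ioi t₀, |y' t| ≤ Real.sqrt (8*M) * t ^ (-(3/2) : ℝ) := by
    intro t ht
    rw [Set.mem_Ioi] at ht
    have htpos : 0 < t := lt_trans ht₀pos ht
    have hΦle : Φ t ≤ M := hMdef ▸ hanti (Set.mem_Ici.mpr le_rfl) (Set.mem_Ici.mpr (le_of_lt ht)) (le_of_lt ht)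
    have h1 : (y' t)^2 ≤ 8*M*(t^3)⁻¹ := by
      have hl := hlow t (le_of_lt ht)
      have ht3 : (0:ℝ) < t^3 := by positivity
      have h2 : (y' t)^2 * t^3 ≤ 8*M := by nlinarith [hl, hΦle]
      calc (y' t)^2 = ((y' t)^2 * t^3) * (t^3)⁻¹ := by field_simp
        _ ≤ (8*M)*(t^3)⁻¹ := mul_le_mul_of_nonneg_right h2 (by positivity)
    have hs : Real.sqrt ((t^3)⁻¹) = t ^ (-(3/2) : ℝ) := by
      rw [Real.sqrt_inv, Real.sqrt_eq_rpow, ← Real.rpow_natCast t 3,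
        ← Real.rpow_mul (le_of_lt htpos), ← Real.rpow_neg (le_of_lt htpos)]
      norm_num
    calc |y' t| = Real.sqrt ((y' t)^2) := (Real.sqrt_sq_eq_abs _).symm
      _ ≤ Real.sqrt (8*M*(t^3)⁻¹) := Real.sqrt_le_sqrt h1
      _ = Real.sqrt (8*M) * Real.sqrt ((t^3)⁻¹) := Real.sqrt_mul (by positivity) _
      _ = Real.sqrt (8*M) * t ^ (-(3/2) : ℝ) := by rw [hs]
  -- boundedness of y' near 0
  obtain ⟨δ, hδpos, hδ⟩ := Metric.tendsto_nhdsWithin_nhds.mp hy'0 1 one_pos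
  obtain ⟨ε, hεdef⟩ : ∃ ε : ℝ, ε = min (δ/2) t₀ := ⟨_, rfl⟩
  have hεpos : 0 < ε := hεdef ▸ lt_min (by linarith) ht₀pos
  have hy'cont : ContinuousOn y' (Set.Icc ε t₀) := by
    intro s hs
    have hs0 : 0 < s := lt_of_lt_of_le hεpos hs.1
    exact ((hy'' s hs0).continuousAt).continuousWithinAt
  obtain ⟨C, hC⟩ := (isCompact_Icc).exists_bound_of_continuousOn hy'cont
  obtain ⟨B, hBdef⟩ : ∃ B : ℝ, B = max C 1 := ⟨_, rfl⟩
  have hbound : ∀ t ∈ Set.Ioc (0:ℝ) t₀, |y' t| ≤ B := by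
    intro t ht
    by_cases hcase : t < ε
    · have htδ : dist t 0 < δ := by
        rw [Real.dist_eq, sub_zero, abs_of_pos ht.1]
        calc t < ε := hcase
          _ ≤ δ/2 := hεdef ▸ min_le_left (δ/2) t₀
          _ < δ := by linarith
      have := hδ (Set.mem_Ioi.mpr ht.1) htδ
      rw [Real.dist_eq, sub_zero] at this
      exact le_trans (le_of_lt this) (hBdef ▸ le_max_right C 1)
    · push_neg at hcase
      have := hC t ⟨hcase, ht.2⟩
      rw [Real.norm_eq_abs] at this
      exact le_trans this (hBdef ▸ le_max_left C 1)
  -- split the integral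
  have hsplit : Set.Ioi (0:ℝ) = Set.Ioc 0 t₀ ∪ Set.Ioi t₀ :=
    (Set.Ioc_union_Ioi_eq_Ioi (le_of_lt ht₀pos)).symm
  rw [hsplit, MeasureTheory.lintegral_union measurableSet_Ioi Set.Ioc_disjoint_Ioi_same]
  have hfin1 : (∫⁻ t in Set.Ioc (0:ℝ) t₀, ENNReal.ofReal |y' t|) < ⊤ := by
    have hle : (∫⁻ t in Set.Ioc (0:ℝ) t₀, ENNReal.ofReal |y' t|)
        ≤ ∫⁻ _ in Set.Ioc (0:ℝ) t₀, ENNReal.ofReal B := by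
      apply MeasureTheory.setLIntegral_mono' measurableSet_Ioc
      intro t ht
      exact ENNReal.ofReal_le_ofReal (hbound t ht)
    refine lt_of_le_of_lt hle ?_
    rw [MeasureTheory.setLIntegral_const]
    exact ENNReal.mul_lt_top ENNReal.ofReal_lt_top measure_Ioc_lt_top
  have hfin2 : (∫⁻ t in Set.Ioi t₀, ENNReal.ofReal |y' t|) < ⊤ := by
    have hint : MeasureTheory.IntegrableOn
        (fun t : ℝ => Real.sqrt (8*M) * t ^ (-(3/2) : ℝ)) (Set.Ioi t₀) := by
      exact (integrableOn_Ioi_rpow_of_lt (by norm_num) ht₀pos).const_mul (Real.sqrt (8*M))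
    have hle : (∫⁻ t in Set.Ioi t₀, ENNReal.ofReal |y' t|)
        ≤ ∫⁻ t in Set.Ioi t₀, ENNReal.ofReal ‖Real.sqrt (8*M) * t ^ (-(3/2) : ℝ)‖ := by
      apply MeasureTheory.setLIntegral_mono' measurableSet_Ioi
      intro t ht
      exact ENNReal.ofReal_le_ofReal (le_trans (hdecay t ht) (le_abs_self _))
    refine lt_of_le_of_lt hle ?_
    exact (MeasureTheory.hasFiniteIntegral_iff_norm _).mp hint.hasFiniteIntegral
  exact ENNReal.add_lt_top.mpr ⟨hfin1, hfin2⟩
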